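/- Let X be a random variable taking values in (0,1) such that the conditional expectations are well defined. Then for any y with 1 ≤ y ≤ n-1, E[X/(1-X)] · E[(1-X)/X] ≥ 1 for any probability distribution of X on (0,1); consequently, if q_y = C(n,y) ∫ x^y (1-x)^{n-y} dP_X(x) is the output pmf of the binomial channel, then q_{y+1} q_{y-1} / q_y² ≥ y(n-y)/((y+1)(n-y+1)). -/
import Mathlib


open Real MeasureTheory

private lemma cs_integral (μ : Measure ℝ) [IsProbabilityMeasure μ] (f g h : ℝ → ℝ)
    (hf : Integrable f μ) (hg : Integrable g μ) (hh : Integrable h μ)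
    (hae : ∀ᵐ x ∂μ, 0 ≤ f x ∧ 0 < g x ∧ 0 ≤ h x ∧ f x ^ 2 ≤ g x * h x)
    (hG : 0 < ∫ x, g x ∂μ) (hH : 0 < ∫ x, h x ∂μ) :
    (∫ x, f x ∂μ) ^ 2 ≤ (∫ x, g x ∂μ) * (∫ x, h x ∂μ) := by
  set F := ∫ x, f x ∂μ with hF
  set G := ∫ x, g x ∂μ with hGdef
  set H := ∫ x, h x ∂μ with hHdef
  have hFnn : 0 ≤ F := integral_nonneg_of_ae (hae.mono fun x hx => hx.1)
  have key : ∀ t : ℝ, 0 < t → 2 * t * F ≤ t ^ 2 * G + H := by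
    intro t ht
    have hpt : ∀ᵐ x ∂μ, 2 * t * f x ≤ t ^ 2 * g x + h x := by
      refine hae.mono fun x ⟨h0, h1, h2, h3⟩ => ?_
      nlinarith [sq_nonneg (t * g x - f x), h1.le, mul_pos ht h1]
    calc 2 * t * F = ∫ x, 2 * t * f x ∂μ := (integral_const_mul _ _).symm
      _ ≤ ∫ x, (t ^ 2 * g x + h x) ∂μ :=
          integral_mono_ae (hf.const_mul _) ((hg.const_mul _).add hh) hpt
      _ = t ^ 2 * G + H := by rw [integral_add (hg.const_mul _) hh, integral_const_mul]
  set t := Real.sqrt (H / G) with htdef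
  have ht : 0 < t := Real.sqrt_pos.2 (div_pos hH hG)
  have ht2 : t ^ 2 = H / G := Real.sq_sqrt (div_pos hH hG).le
  have hk := key t ht
  rw [ht2] at hk
  have h2H : 2 * t * F ≤ 2 * H := by
    have : H / G * G = H := div_mul_cancel₀ _ hG.ne'
    linarith [this ▸ hk]
  have htF : t * F ≤ H := by linarith
  have hsq : (t * F) ^ 2 ≤ H ^ 2 := by
    have := mul_self_le_mul_self (mul_nonneg ht.le hFnn) htF
    nlinarith
  have : H / G * F ^ 2 ≤ H ^ 2 := by
    calc H / G * F ^ 2 = (t * F) ^ 2 := by rw [← ht2]; ring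
      _ ≤ H ^ 2 := hsq
  have h3 : H * F ^ 2 ≤ G * H ^ 2 := by
    have hmul := mul_le_mul_of_nonneg_left this hG.le
    have hGH : G * (H / G * F ^ 2) = H * F ^ 2 := by field_simp
    linarith [hGH ▸ hmul]
  have h4 : H * F ^ 2 ≤ H * (G * H) := by nlinarith [h3]
  exact le_of_mul_le_mul_left h4 hH

private lemma poly_integrable (μ : Measure ℝ) [IsProbabilityMeasure μ]
    (hsupp : μ (Set.Ioo (0 : ℝ) 1)ᶜ = 0) (k l : ℕ) :
    Integrable (fun x => x ^ k * (1 - x) ^ l) μ := by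
  have hae : ∀ᵐ x ∂μ, x ∈ Set.Ioo (0 : ℝ) 1 := by
    exact mem_ae_iff.2 hsupp
  refine (integrable_const (1 : ℝ)).mono' ?_ ?_
  · exact (Continuous.aestronglyMeasurable (by fun_prop))
  · refine hae.mono fun x hx => ?_
    obtain ⟨hx0, hx1⟩ := hx
    have h1x : (0:ℝ) ≤ 1 - x := by linarith
    have hnn : (0:ℝ) ≤ x ^ k * (1 - x) ^ l :=
      mul_nonneg (pow_nonneg hx0.le _) (pow_nonneg h1x _)
    rw [Real.norm_eq_abs, abs_of_nonneg hnn]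
    calc x ^ k * (1 - x) ^ l ≤ 1 * 1 :=
          mul_le_mul (pow_le_one₀ hx0.le hx1.le) (pow_le_one₀ h1x (by linarith))
            (pow_nonneg h1x _) zero_le_one
      _ = 1 := by norm_num

private lemma int_pos (μ : Measure ℝ) [IsProbabilityMeasure μ]
    (hsupp : μ (Set.Ioo (0 : ℝ) 1)ᶜ = 0) (f : ℝ → ℝ) (hf : Integrable f μ)
    (hpos : ∀ x ∈ Set.Ioo (0 : ℝ) 1, 0 < f x) : 0 < ∫ x, f x ∂μ := by
  have hae : ∀ᵐ x ∂μ, x ∈ Set.Ioo (0 : ℝ) 1 := by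
    exact mem_ae_iff.2 hsupp
  have hnn : 0 ≤ᵐ[μ] f := hae.mono fun x hx => (hpos x hx).le
  rw [integral_pos_iff_support_of_nonneg_ae hnn hf]
  have hsub : Set.Ioo (0 : ℝ) 1 ⊆ Function.support f := fun x hx => (hpos x hx).ne'
  have hIoo : μ (Set.Ioo (0 : ℝ) 1) = 1 := by
    have h := measure_add_measure_compl (μ := μ) (s := Set.Ioo (0:ℝ) 1) measurableSet_Ioo
    rw [hsupp, add_zero, measure_univ] at h
    exact h
  calc (0 : ENNReal) < 1 := zero_lt_one
    _ = μ (Set.Ioo (0 : ℝ) 1) := hIoo.symm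
    _ ≤ μ (Function.support f) := measure_mono hsub

theorem binomial_output_log_convexity (n : ℕ) (hn : 2 ≤ n)
    (μ : Measure ℝ) [IsProbabilityMeasure μ]
    (hsupp : μ (Set.Ioo (0 : ℝ) 1)ᶜ = 0)
    (h1 : Integrable (fun x => x / (1 - x)) μ)
    (h2 : Integrable (fun x => (1 - x) / x) μ)
    (q : ℕ → ℝ)
    (hq : ∀ y, q y = (n.choose y : ℝ) * ∫ x, x ^ y * (1 - x) ^ (n - y) ∂μ)
    (y : ℕ) (hy1 : 1 ≤ y) (hy2 : y ≤ n - 1) (hqy : 0 < q y) :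
    (∫ x, x / (1 - x) ∂μ) * (∫ x, (1 - x) / x ∂μ) ≥ 1 ∧
    q (y + 1) * q (y - 1) / (q y) ^ 2 ≥
      (y : ℝ) * ((n : ℝ) - y) / (((y : ℝ) + 1) * ((n : ℝ) - y + 1)) := by
  have hae : ∀ᵐ x ∂μ, x ∈ Set.Ioo (0 : ℝ) 1 := by
    exact mem_ae_iff.2 hsupp
  constructor
  · -- first part
    have hG : 0 < ∫ x, x / (1 - x) ∂μ := by
      refine int_pos μ hsupp _ h1 fun x ⟨hx0, hx1⟩ => div_pos hx0 (by linarith)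
    have hH : 0 < ∫ x, (1 - x) / x ∂μ := by
      refine int_pos μ hsupp _ h2 fun x ⟨hx0, hx1⟩ => div_pos (by linarith) hx0
    have := cs_integral μ (fun _ => 1) (fun x => x / (1 - x)) (fun x => (1 - x) / x)
      (integrable_const 1) h1 h2 ?_ hG hH
    · have h1int : ∫ (_ : ℝ), (1 : ℝ) ∂μ = 1 := by simp
      rw [h1int] at this
      linarith [this]
    · refine hae.mono fun x ⟨hx0, hx1⟩ => ?_
      refine ⟨zero_le_one, div_pos hx0 (by linarith), (div_pos (by linarith) hx0).le, ?_⟩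
      have hx1' : (1 : ℝ) - x ≠ 0 := by linarith
      have : x / (1 - x) * ((1 - x) / x) = 1 := by field_simp
      rw [this]; norm_num
  · -- second part
    have hylt : y < n := by omega
    obtain ⟨m, hm⟩ : ∃ m, n = y + m := ⟨n - y, by omega⟩
    have hm1 : 1 ≤ m := by omega
    set a := fun x : ℝ => x ^ (y + 1) * (1 - x) ^ (n - (y + 1)) with hadef
    set b := fun x : ℝ => x ^ (y - 1) * (1 - x) ^ (n - (y - 1)) with hbdef
    set c := fun x : ℝ => x ^ y * (1 - x) ^ (n - y) with hcdef
    have hia : Integrable a μ := poly_integrable μ hsupp _ _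
    have hib : Integrable b μ := poly_integrable μ hsupp _ _
    have hic : Integrable c μ := poly_integrable μ hsupp _ _
    have hIa : 0 < ∫ x, a x ∂μ :=
      int_pos μ hsupp a hia fun x ⟨hx0, hx1⟩ => by
        have : (0:ℝ) < 1 - x := by linarith
        positivity
    have hIb : 0 < ∫ x, b x ∂μ :=
      int_pos μ hsupp b hib fun x ⟨hx0, hx1⟩ => by
        have : (0:ℝ) < 1 - x := by linarith
        positivity
    have hIc : 0 < ∫ x, c x ∂μ := by
      have hqy' := hq y
      have hCpos : (0:ℝ) < (n.choose y : ℝ) := by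
        exact_mod_cast Nat.choose_pos hylt.le
      nlinarith [hqy, hqy' ▸ hqy, mul_nonneg hCpos.le (le_of_lt hIa)]
    have hcs : (∫ x, c x ∂μ) ^ 2 ≤ (∫ x, a x ∂μ) * (∫ x, b x ∂μ) := by
      refine cs_integral μ c a b hic hia hib ?_ hIa hIb
      refine hae.mono fun x ⟨hx0, hx1⟩ => ?_
      have hx1' : (0:ℝ) < 1 - x := by linarith
      refine ⟨by positivity, by positivity, by positivity, le_of_eq ?_⟩
      show (x ^ y * (1 - x) ^ (n - y)) ^ 2 =
        x ^ (y + 1) * (1 - x) ^ (n - (y + 1)) * (x ^ (y - 1) * (1 - x) ^ (n - (y - 1)))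
      have e1 : (y + 1) + (y - 1) = y * 2 := by omega
      have e2 : (n - (y + 1)) + (n - (y - 1)) = (n - y) * 2 := by omega
      calc (x ^ y * (1 - x) ^ (n - y)) ^ 2 = x ^ (y * 2) * (1 - x) ^ ((n - y) * 2) := by
            rw [mul_pow, ← pow_mul, ← pow_mul]
        _ = x ^ ((y + 1) + (y - 1)) * (1 - x) ^ ((n - (y + 1)) + (n - (y - 1))) := by
            rw [e1, e2]
        _ = _ := by rw [pow_add, pow_add]; ring
    -- choose identities
    have hy' : y - 1 + 1 = y := by omega
    have hc1 : (n.choose (y + 1) : ℝ) * ((y : ℝ) + 1) = (n.choose y : ℝ) * (m : ℝ) := by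
      have := Nat.choose_succ_right_eq n y
      have hny : n - y = m := by omega
      rw [hny] at this
      exact_mod_cast this
    have hc2 : (n.choose y : ℝ) * (y : ℝ) = (n.choose (y - 1) : ℝ) * ((m : ℝ) + 1) := by
      have := Nat.choose_succ_right_eq n (y - 1)
      rw [hy'] at this
      have hny : n - (y - 1) = m + 1 := by omega
      rw [hny] at this
      exact_mod_cast this
    have hcm : ((n : ℝ) - y) = (m : ℝ) := by
      have : (n : ℝ) = (y : ℝ) + (m : ℝ) := by exact_mod_cast hm
      linarith
    rw [hcm]
    set Ia := ∫ x, a x ∂μ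
    set Ib := ∫ x, b x ∂μ
    set Ic := ∫ x, c x ∂μ
    have hqyv : q y = (n.choose y : ℝ) * Ic := hq y
    have hqy1 : q (y + 1) = (n.choose (y + 1) : ℝ) * Ia := hq (y + 1)
    have hqym : q (y - 1) = (n.choose (y - 1) : ℝ) * Ib := hq (y - 1)
    rw [ge_iff_le, div_le_div_iff₀ (by positivity) (by positivity)]
    rw [hqyv, hqy1, hqym]
    have hCy : (0:ℝ) < (n.choose y : ℝ) := by exact_mod_cast Nat.choose_pos hylt.le
    have hmpos : (0:ℝ) < (m : ℝ) := by exact_mod_cast hm1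
    have hypos : (0:ℝ) < (y : ℝ) := by exact_mod_cast hy1
    calc (y : ℝ) * (m : ℝ) * ((n.choose y : ℝ) * Ic) ^ 2
        = ((n.choose y : ℝ) * (m : ℝ)) * ((n.choose y : ℝ) * (y : ℝ)) * Ic ^ 2 := by ring
      _ ≤ ((n.choose y : ℝ) * (m : ℝ)) * ((n.choose y : ℝ) * (y : ℝ)) * (Ia * Ib) := by
          apply mul_le_mul_of_nonneg_left hcs
          positivity
      _ = ((n.choose (y + 1) : ℝ) * ((y : ℝ) + 1)) * ((n.choose (y - 1) : ℝ) * ((m : ℝ) + 1)) * (Ia * Ib) := by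
          rw [hc1, hc2]
      _ = (n.choose (y + 1) : ℝ) * Ia * ((n.choose (y - 1) : ℝ) * Ib) * (((y : ℝ) + 1) * ((m : ℝ) + 1)) := by
          ring
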